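/- Let F be a field and let L be a transitive ℤ-graded Lie algebra over F satisfying L_{-i} = [L_{-1}, L_{-i+1}] for all i > 1. Let V ⊆ L_1 be an L_0-submodule (an F-subspace with [L_0, V] ⊆ V), and let L' be the Lie subalgebra of L generated by L_{-1} + L_0 + V. Then L' is a graded subalgebra, i.e. L' = ⊕_{i∈ℤ} (L' ∩ L_i); moreover L' ∩ L_i = L_i for every i ≤ 0, L' ∩ L_1 = V, and L', with the grading L'_i = L' ∩ L_i, is again transitive. -/

import Mathlib

namespace Stmt11Aux

variable {F L : Type*} [Field F] [LieRing L] [LieAlgebra F L]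

/-- Candidate graded piece in degree `n+1`. -/
def P (F : Type*) {L : Type*} [Field F] [LieRing L] [LieAlgebra F L]
    (V : Submodule F L) : ℕ → Submodule F L
  | 0 => V
  | n + 1 => Submodule.span F {m | ∃ v ∈ V, ∃ y ∈ P F V n, m = ⁅v, y⁆}

lemma P_zero (V : Submodule F L) : P F V 0 = V := rfl

lemma P_succ (V : Submodule F L) (n : ℕ) :
    P F V (n + 1) = Submodule.span F {m | ∃ v ∈ V, ∃ y ∈ P F V n, m = ⁅v, y⁆} := rfl

/-- Candidate graded pieces of `L'`. -/
def Mi (Lgr : ℤ → Submodule F L) (V : Submodule F L) (i : ℤ) : Submodule F L :=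
  if i ≤ 0 then Lgr i else P F V (i.toNat - 1)

lemma Mi_nonpos (Lgr : ℤ → Submodule F L) (V : Submodule F L) {i : ℤ} (h : i ≤ 0) :
    Mi Lgr V i = Lgr i := if_pos h

lemma Mi_pos (Lgr : ℤ → Submodule F L) (V : Submodule F L) {i : ℤ} (h : 0 < i) :
    Mi Lgr V i = P F V (i.toNat - 1) := if_neg (by omega)

lemma Mi_natcast (Lgr : ℤ → Submodule F L) (V : Submodule F L) (n : ℕ) :
    Mi Lgr V ((n : ℤ) + 1) = P F V n := by
  have h : ¬ ((n : ℤ) + 1 ≤ 0) := by omega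
  rw [Mi, if_neg h, show ((n : ℤ) + 1).toNat - 1 = n from by omega]

section

variable (Lgr : ℤ → Submodule F L) (V : Submodule F L)
variable (hbracket : ∀ i j : ℤ, ∀ x ∈ Lgr i, ∀ y ∈ Lgr j, ⁅x, y⁆ ∈ Lgr (i + j))
variable (hgen : ∀ i : ℤ, 1 < i →
      Lgr (-i) = Submodule.span F {m | ∃ x ∈ Lgr (-1), ∃ y ∈ Lgr (-i + 1), m = ⁅x, y⁆})
variable (hV1 : V ≤ Lgr 1)
variable (hVmod : ∀ z ∈ Lgr 0, ∀ v ∈ V, ⁅z, v⁆ ∈ V)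

include hV1 hbracket in
lemma P_le_Lgr : ∀ n : ℕ, P F V n ≤ Lgr ((n : ℤ) + 1) := by
  intro n
  induction n with
  | zero => exact hV1
  | succ n ih =>
    rw [P_succ, Submodule.span_le]
    rintro m ⟨v, hv, y, hy, rfl⟩
    have := hbracket 1 ((n : ℤ) + 1) v (hV1 hv) y (ih hy)
    rwa [show (1 : ℤ) + ((n : ℤ) + 1) = ((n : ℤ) + 1) + 1 by ring] at this

lemma Mi_le_Lgr (hbracket : ∀ i j : ℤ, ∀ x ∈ Lgr i, ∀ y ∈ Lgr j, ⁅x, y⁆ ∈ Lgr (i + j))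
    (hV1 : V ≤ Lgr 1) : ∀ i : ℤ, Mi Lgr V i ≤ Lgr i := by
  intro i
  rcases le_or_gt i 0 with h | h
  · rw [Mi_nonpos _ _ h]
  · rw [Mi_pos _ _ h, show i = ((i.toNat - 1 : ℕ) : ℤ) + 1 from by omega]
    exact P_le_Lgr Lgr V hbracket hV1 _

include hVmod in
lemma lie0P : ∀ n : ℕ, ∀ z ∈ Lgr 0, ∀ y ∈ P F V n, ⁅z, y⁆ ∈ P F V n := by
  intro n
  induction n with
  | zero => exact hVmod
  | succ n ih =>
    intro z hz y hy
    rw [P_succ] at hy ⊢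
    induction hy using Submodule.span_induction with
    | mem m hm =>
      obtain ⟨v, hv, w, hw, rfl⟩ := hm
      rw [leibniz_lie]
      exact add_mem (Submodule.subset_span ⟨⁅z, v⁆, hVmod z hz v hv, w, hw, rfl⟩)
        (Submodule.subset_span ⟨v, hv, ⁅z, w⁆, ih z hz w hw, rfl⟩)
    | zero => rw [lie_zero]; exact zero_mem _
    | add a b _ _ ha hb => rw [lie_add]; exact add_mem ha hb
    | smul c a _ ha => rw [lie_smul]; exact Submodule.smul_mem _ _ ha

lemma liePV : ∀ m : ℕ, ∀ x ∈ P F V m, ∀ v ∈ V, ⁅x, v⁆ ∈ P F V (m + 1) := by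
  intro m x hx v hv
  rw [← lie_skew]
  exact neg_mem (by rw [P_succ]; exact Submodule.subset_span ⟨v, hv, x, hx, rfl⟩)

lemma liePP : ∀ n m : ℕ, ∀ x ∈ P F V m, ∀ y ∈ P F V n, ⁅x, y⁆ ∈ P F V (m + n + 1) := by
  intro n
  induction n with
  | zero => intro m x hx y hy; exact liePV V m x hx y hy
  | succ n ih =>
    intro m x hx y hy
    rw [P_succ] at hy
    induction hy using Submodule.span_induction with
    | mem m' hm =>
      obtain ⟨v, hv, w, hw, rfl⟩ := hm
      rw [leibniz_lie]
      refine add_mem ?_ ?_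
      · have h := ih (m + 1) ⁅x, v⁆ (liePV V m x hx v hv) w hw
        rwa [show m + 1 + n + 1 = m + (n + 1) + 1 by omega] at h
      · rw [P_succ]
        exact Submodule.subset_span ⟨v, hv, ⁅x, w⁆, ih m x hx w hw, rfl⟩
    | zero => rw [lie_zero]; exact zero_mem _
    | add a b _ _ ha hb => rw [lie_add]; exact add_mem ha hb
    | smul c a _ ha => rw [lie_smul]; exact Submodule.smul_mem _ _ ha

include hVmod in
lemma lieVMi : ∀ n : ℕ, ∀ v ∈ V, ∀ u ∈ Mi Lgr V (n : ℤ), ⁅v, u⁆ ∈ P F V n := by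
  intro n v hv u hu
  cases n with
  | zero =>
    rw [Nat.cast_zero, Mi_nonpos _ _ le_rfl] at hu
    rw [← lie_skew]
    exact neg_mem (hVmod u hu v hv)
  | succ n =>
    rw [show ((n + 1 : ℕ) : ℤ) = (n : ℤ) + 1 by push_cast; ring, Mi_natcast] at hu
    rw [P_succ]
    exact Submodule.subset_span ⟨v, hv, u, hu, rfl⟩

include hbracket hV1 hVmod in
lemma lieNeg1P : ∀ n : ℕ, ∀ w ∈ Lgr (-1), ∀ y ∈ P F V n, ⁅w, y⁆ ∈ Mi Lgr V (n : ℤ) := by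
  intro n
  induction n with
  | zero =>
    intro w hw y hy
    rw [Nat.cast_zero, Mi_nonpos _ _ le_rfl]
    have := hbracket (-1) 1 w hw y (hV1 hy)
    norm_num at this
    exact this
  | succ n ih =>
    intro w hw y hy
    rw [P_succ] at hy
    rw [show ((n + 1 : ℕ) : ℤ) = (n : ℤ) + 1 by push_cast; ring, Mi_natcast]
    induction hy using Submodule.span_induction with
    | mem m hm =>
      obtain ⟨v, hv, z, hz, rfl⟩ := hm
      rw [leibniz_lie]
      refine add_mem ?_ ?_
      · have h0 : ⁅w, v⁆ ∈ Lgr 0 := by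
          have := hbracket (-1) 1 w hw v (hV1 hv); norm_num at this; exact this
        exact lie0P Lgr V hVmod n ⁅w, v⁆ h0 z hz
      · exact lieVMi Lgr V hVmod n v hv ⁅w, z⁆ (ih w hw z hz)
    | zero => rw [lie_zero]; exact zero_mem _
    | add a b _ _ ha hb => rw [lie_add]; exact add_mem ha hb
    | smul c a _ ha => rw [lie_smul]; exact Submodule.smul_mem _ _ ha

include hbracket hgen hV1 hVmod in
lemma lieNegP : ∀ k n : ℕ, ∀ w ∈ Lgr (-(k : ℤ)), ∀ y ∈ P F V n,
    ⁅w, y⁆ ∈ Mi Lgr V ((n : ℤ) + 1 - k) := by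
  intro k
  induction k using Nat.strong_induction_on with
  | _ k ihk =>
    match k with
    | 0 =>
      intro n w hw y hy
      rw [show (n : ℤ) + 1 - (0 : ℕ) = (n : ℤ) + 1 by push_cast; ring, Mi_natcast]
      exact lie0P Lgr V hVmod n w (by norm_num at hw; exact hw) y hy
    | 1 =>
      intro n w hw y hy
      rw [show (n : ℤ) + 1 - (1 : ℕ) = (n : ℤ) by push_cast; ring]
      exact lieNeg1P Lgr V hbracket hV1 hVmod n w (by exact_mod_cast hw) y hy
    | (k + 2) =>
      intro n w hw y hy
      have hk2 : (1 : ℤ) < ((k + 2 : ℕ) : ℤ) := by push_cast; omega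
      rw [hgen _ hk2] at hw
      induction hw using Submodule.span_induction with
      | mem m hm =>
        obtain ⟨x, hx, u, hu, rfl⟩ := hm
        rw [lie_lie]
        refine sub_mem ?_ ?_
        · have hu' : u ∈ Lgr (-((k + 1 : ℕ) : ℤ)) := by
            rwa [show -((k + 1 : ℕ) : ℤ) = -((k + 2 : ℕ) : ℤ) + 1 by push_cast; ring]
          have h1 := ihk (k + 1) (by omega) n u hu' y hy
          -- h1 : ⁅u, y⁆ ∈ Mi Lgr V ((n:ℤ) + 1 - (k+1))
          rcases le_or_gt ((n : ℤ) - (k : ℤ)) 0 with hle | hpos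
          · rw [Mi_nonpos _ _ (by push_cast; omega)] at h1
            rw [Mi_nonpos _ _ (by push_cast; omega)]
            have := hbracket (-1) ((n : ℤ) + 1 - ((k + 1 : ℕ) : ℤ)) x hx _ h1
            rwa [show -1 + ((n : ℤ) + 1 - ((k + 1 : ℕ) : ℤ)) = (n : ℤ) + 1 - ((k + 2 : ℕ) : ℤ)
              by push_cast; ring] at this
          · set m := n - (k + 1) with hm
            have hmn : ((m : ℕ) : ℤ) = (n : ℤ) - (k : ℤ) - 1 := by omega
            rw [show (n : ℤ) + 1 - ((k + 1 : ℕ) : ℤ) = ((m : ℕ) : ℤ) + 1 by push_cast; omega,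
              Mi_natcast] at h1
            have h2 := lieNeg1P Lgr V hbracket hV1 hVmod m x hx _ h1
            rwa [show ((m : ℕ) : ℤ) = (n : ℤ) + 1 - ((k + 2 : ℕ) : ℤ) by push_cast; omega] at h2
        · have h2 := lieNeg1P Lgr V hbracket hV1 hVmod n x hx y hy
          have hu' : u ∈ Lgr (-((k + 1 : ℕ) : ℤ)) := by
            rwa [show -((k + 1 : ℕ) : ℤ) = -((k + 2 : ℕ) : ℤ) + 1 by push_cast; ring]
          cases n with
          | zero =>
            rw [Nat.cast_zero, Mi_nonpos _ _ le_rfl] at h2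
            have := hbracket (-((k + 1 : ℕ) : ℤ)) 0 u hu' _ h2
            rw [Mi_nonpos _ _ (by push_cast; omega)]
            rwa [show -((k + 1 : ℕ) : ℤ) + 0 = ((0 : ℕ) : ℤ) + 1 - ((k + 2 : ℕ) : ℤ)
              by push_cast; ring] at this
          | succ n' =>
            rw [show ((n' + 1 : ℕ) : ℤ) = ((n' : ℕ) : ℤ) + 1 by push_cast; ring,
              Mi_natcast] at h2
            have := ihk (k + 1) (by omega) n' u hu' _ h2
            rwa [show ((n' : ℕ) : ℤ) + 1 - ((k + 1 : ℕ) : ℤ)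
                = ((n' + 1 : ℕ) : ℤ) + 1 - ((k + 2 : ℕ) : ℤ) by push_cast; ring] at this
      | zero => rw [zero_lie]; exact zero_mem _
      | add a b _ _ ha hb => rw [add_lie]; exact add_mem ha hb
      | smul c a _ ha => rw [smul_lie]; exact Submodule.smul_mem _ _ ha

include hbracket hgen hV1 hVmod in
lemma keyBr : ∀ i j : ℤ, ∀ x ∈ Mi Lgr V i, ∀ y ∈ Mi Lgr V j, ⁅x, y⁆ ∈ Mi Lgr V (i + j) := by
  have main : ∀ i j : ℤ, i ≤ 0 → 0 < j → ∀ x ∈ Mi Lgr V i, ∀ y ∈ Mi Lgr V j,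
      ⁅x, y⁆ ∈ Mi Lgr V (i + j) := by
    intro i j hi hj x hx y hy
    rw [Mi_nonpos _ _ hi] at hx
    rw [Mi_pos _ _ hj] at hy
    have hx' : x ∈ Lgr (-(((-i).toNat : ℕ) : ℤ)) := by
      rwa [show -(((-i).toNat : ℕ) : ℤ) = i by omega]
    have := lieNegP Lgr V hbracket hgen hV1 hVmod (-i).toNat (j.toNat - 1) x hx' y hy
    rwa [show ((j.toNat - 1 : ℕ) : ℤ) + 1 - (((-i).toNat : ℕ) : ℤ) = i + j by omega] at this
  intro i j x hx y hy
  rcases le_or_gt i 0 with hi | hi <;> rcases le_or_gt j 0 with hj | hj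
  · rw [Mi_nonpos _ _ hi] at hx
    rw [Mi_nonpos _ _ hj] at hy
    rw [Mi_nonpos _ _ (by omega)]
    exact hbracket i j x hx y hy
  · exact main i j hi hj x hx y hy
  · rw [← lie_skew]
    exact neg_mem (by rw [show i + j = j + i by ring]; exact main j i hj hi y hy x hx)
  · rw [Mi_pos _ _ hi] at hx
    rw [Mi_pos _ _ hj] at hy
    have := liePP V (j.toNat - 1) (i.toNat - 1) x hx y hy
    rw [show i + j = (((i.toNat - 1) + (j.toNat - 1) + 1 : ℕ) : ℤ) + 1 by push_cast; omega,
      Mi_natcast]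
    exact this

include hgen in
lemma Lgr_neg_le_span (S : Set L) (hm1 : (Lgr (-1) : Set L) ⊆ S) (h0 : (Lgr 0 : Set L) ⊆ S) :
    ∀ k : ℕ, Lgr (-(k : ℤ)) ≤ (LieSubalgebra.lieSpan F L S).toSubmodule := by
  intro k
  induction k using Nat.strong_induction_on with
  | _ k ihk =>
    match k with
    | 0 =>
      intro x hx
      exact LieSubalgebra.subset_lieSpan (h0 (by simpa using hx))
    | 1 =>
      intro x hx
      exact LieSubalgebra.subset_lieSpan (hm1 (by exact_mod_cast hx))
    | (k + 2) =>
      have hk2 : (1 : ℤ) < ((k + 2 : ℕ) : ℤ) := by push_cast; omega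
      rw [hgen _ hk2, Submodule.span_le]
      rintro m ⟨x, hx, u, hu, rfl⟩
      have hx' : x ∈ LieSubalgebra.lieSpan F L S := by
        refine ihk 1 (by omega) ?_
        exact_mod_cast hx
      have hu' : u ∈ LieSubalgebra.lieSpan F L S := by
        refine ihk (k + 1) (by omega) ?_
        rwa [show -((k + 1 : ℕ) : ℤ) = -((k + 2 : ℕ) : ℤ) + 1 by push_cast; ring]
      exact (LieSubalgebra.lieSpan F L S).lie_mem hx' hu'

lemma P_le_span (S : Set L) (hVS : (V : Set L) ⊆ S) :
    ∀ n : ℕ, P F V n ≤ (LieSubalgebra.lieSpan F L S).toSubmodule := by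
  intro n
  induction n with
  | zero => intro x hx; exact LieSubalgebra.subset_lieSpan (hVS hx)
  | succ n ih =>
    rw [P_succ, Submodule.span_le]
    rintro m ⟨v, hv, y, hy, rfl⟩
    exact (LieSubalgebra.lieSpan F L S).lie_mem (LieSubalgebra.subset_lieSpan (hVS hv)) (ih hy)

end

end Stmt11Aux

open Stmt11Aux

/-- Let `F` be a field and let `L` be a transitive `ℤ`-graded Lie algebra over
`F` satisfying `L₋ᵢ = [L₋₁, L₋ᵢ₊₁]` for all `i > 1`.  Let `V ⊆ L₁` be an `L₀`-submodule and let
`L'` be the Lie subalgebra of `L` generated by `L₋₁ + L₀ + V`.  Then `L'` is a graded subalgebra,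
`L' ∩ Lᵢ = Lᵢ` for every `i ≤ 0`, `L' ∩ L₁ = V`, and `L'`, with the grading `L'ᵢ = L' ∩ Lᵢ`, is
again transitive. -/
theorem stmt_11 {F L : Type*} [Field F] [LieRing L] [LieAlgebra F L]
    (Lgr : ℤ → Submodule F L)
    (hdirect : DirectSum.IsInternal Lgr)
    (hbracket : ∀ i j : ℤ, ∀ x ∈ Lgr i, ∀ y ∈ Lgr j, ⁅x, y⁆ ∈ Lgr (i + j))
    (htrans : ∀ i : ℤ, 0 ≤ i → ∀ x ∈ Lgr i, (∀ y ∈ Lgr (-1), ⁅x, y⁆ = 0) → x = 0)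
    (hgen : ∀ i : ℤ, 1 < i →
      Lgr (-i) = Submodule.span F {m | ∃ x ∈ Lgr (-1), ∃ y ∈ Lgr (-i + 1), m = ⁅x, y⁆})
    (V : Submodule F L) (hV1 : V ≤ Lgr 1)
    (hVmod : ∀ z ∈ Lgr 0, ∀ v ∈ V, ⁅z, v⁆ ∈ V)
    (L' : LieSubalgebra F L)
    (hL' : L' = LieSubalgebra.lieSpan F L ((Lgr (-1) : Set L) ∪ (Lgr 0 : Set L) ∪ (V : Set L))) :
    (L'.toSubmodule = ⨆ i : ℤ, L'.toSubmodule ⊓ Lgr i) ∧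
      (∀ i : ℤ, i ≤ 0 → L'.toSubmodule ⊓ Lgr i = Lgr i) ∧
      (L'.toSubmodule ⊓ Lgr 1 = V) ∧
      (∀ i : ℤ, 0 ≤ i → ∀ x ∈ L'.toSubmodule ⊓ Lgr i,
        (∀ y ∈ L'.toSubmodule ⊓ Lgr (-1), ⁅x, y⁆ = 0) → x = 0) := by
  subst hL'
  set S : Set L := (Lgr (-1) : Set L) ∪ (Lgr 0 : Set L) ∪ (V : Set L) with hS
  set L' : LieSubalgebra F L := LieSubalgebra.lieSpan F L S with hL'
  -- each candidate piece is contained in L'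
  have hMile : ∀ i : ℤ, Mi Lgr V i ≤ L'.toSubmodule := by
    intro i
    rcases le_or_gt i 0 with h | h
    · rw [Mi_nonpos _ _ h, show i = -(((-i).toNat : ℕ) : ℤ) from by omega]
      exact Lgr_neg_le_span Lgr hgen S
        (fun x hx => Or.inl (Or.inl hx)) (fun x hx => Or.inl (Or.inr hx)) _
    · rw [Mi_pos _ _ h]
      exact P_le_span V S (fun x hx => Or.inr hx) _
  have hMiLgr : ∀ i : ℤ, Mi Lgr V i ≤ Lgr i := Mi_le_Lgr Lgr V hbracket hV1
  -- the supremum of the pieces is closed under brackets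
  have hclosed : ∀ x ∈ (⨆ i, Mi Lgr V i), ∀ y ∈ (⨆ i, Mi Lgr V i),
      ⁅x, y⁆ ∈ (⨆ i, Mi Lgr V i) := by
    intro x hx
    refine Submodule.iSup_induction (motive := fun x => ∀ y ∈ (⨆ i, Mi Lgr V i),
      ⁅x, y⁆ ∈ (⨆ i, Mi Lgr V i)) _ hx ?_ ?_ ?_
    · intro i x hxi y hy
      refine Submodule.iSup_induction (motive := fun y => ⁅x, y⁆ ∈ (⨆ i, Mi Lgr V i)) _ hy ?_ ?_ ?_
      · intro j y hyj
        exact Submodule.mem_iSup_of_mem (i + j)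
          (keyBr Lgr V hbracket hgen hV1 hVmod i j x hxi y hyj)
      · beta_reduce; rw [lie_zero]; exact zero_mem _
      · intro a b ha hb; beta_reduce; rw [lie_add]; exact add_mem ha hb
    · intro y hy; beta_reduce; rw [zero_lie]; exact zero_mem _
    · intro a b ha hb y hy; beta_reduce; rw [add_lie]; exact add_mem (ha y hy) (hb y hy)
  let Msub : LieSubalgebra F L :=
    { (⨆ i, Mi Lgr V i : Submodule F L) with
      lie_mem' := fun hx hy => hclosed _ hx _ hy }
  have hSsub : S ⊆ (Msub : Set L) := by
    rintro x ((hx | hx) | hx)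
    · exact Submodule.mem_iSup_of_mem (-1) (by rw [Mi_nonpos _ _ (by omega)]; exact hx)
    · exact Submodule.mem_iSup_of_mem 0 (by rw [Mi_nonpos _ _ le_rfl]; exact hx)
    · exact Submodule.mem_iSup_of_mem 1 (by rw [Mi_pos _ _ one_pos]; exact hx)
  have hL'le : L'.toSubmodule ≤ ⨆ i, Mi Lgr V i :=
    (LieSubalgebra.lieSpan_le.mpr hSsub : L' ≤ Msub)
  have hEq : L'.toSubmodule = ⨆ i, Mi Lgr V i :=
    le_antisymm hL'le (iSup_le hMile)
  -- claim 2
  have claim2 : ∀ i : ℤ, i ≤ 0 → L'.toSubmodule ⊓ Lgr i = Lgr i := by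
    intro i hi
    refine le_antisymm inf_le_right (le_inf ?_ le_rfl)
    rw [show i = -(((-i).toNat : ℕ) : ℤ) from by omega]
    exact Lgr_neg_le_span Lgr hgen S
      (fun x hx => Or.inl (Or.inl hx)) (fun x hx => Or.inl (Or.inr hx)) _
  -- claim 1
  have claim1 : L'.toSubmodule = ⨆ i : ℤ, L'.toSubmodule ⊓ Lgr i := by
    exact le_antisymm
      (le_trans (le_of_eq hEq) (iSup_mono fun i => le_inf (hMile i) (hMiLgr i)))
      (iSup_le fun i => inf_le_left)
  -- claim 3 via the projection onto degree 1
  have claim3 : L'.toSubmodule ⊓ Lgr 1 = V := by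
    refine le_antisymm ?_ (le_inf (fun x hx => LieSubalgebra.subset_lieSpan (Or.inr hx)) hV1)
    rintro x ⟨hxL, hx1⟩
    rw [SetLike.mem_coe, hEq] at hxL
    let e := LinearEquiv.ofBijective (DirectSum.coeLinearMap Lgr) hdirect
    have key : ∀ z ∈ (⨆ i, Mi Lgr V i), ((e.symm z 1 : Lgr 1) : L) ∈ V := by
      intro z hz
      refine Submodule.iSup_induction (motive := fun z => ((e.symm z 1 : Lgr 1) : L) ∈ V)
        _ hz ?_ ?_ ?_
      · intro i z hzi
        beta_reduce
        rcases eq_or_ne i 1 with rfl | hne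
        · have hzV : z ∈ V := by rw [Mi_pos _ _ one_pos] at hzi; exact hzi
          rw [show e.symm z 1 = ⟨z, hV1 hzV⟩ from
            hdirect.ofBijective_coeLinearMap_of_mem (hV1 hzV)]
          exact hzV
        · rw [show e.symm z 1 = 0 from
            hdirect.ofBijective_coeLinearMap_of_mem_ne hne (hMiLgr i hzi)]
          exact zero_mem V
      · beta_reduce
        rw [map_zero]
        simp only [DirectSum.zero_apply, ZeroMemClass.coe_zero]
        exact zero_mem V
      · intro a b ha hb
        beta_reduce
        rw [map_add]
        simp only [DirectSum.add_apply, Submodule.coe_add]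
        exact add_mem ha hb
    have h1 : ((e.symm x 1 : Lgr 1) : L) = x := by
      rw [show e.symm x 1 = ⟨x, hx1⟩ from hdirect.ofBijective_coeLinearMap_of_mem hx1]
    rw [← h1]
    exact key x hxL
  refine ⟨claim1, claim2, claim3, ?_⟩
  -- claim 4 : transitivity
  intro i hi x hx hy
  obtain ⟨hxL, hxi⟩ := hx
  refine htrans i hi x hxi fun y hy1 => hy y ?_
  rw [claim2 (-1) (by norm_num)]
  exact hy1
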